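/- arXiv:1901.03672 — 2 statements merged into one kernel-verified Lean document; each statement's English description precedes it below -/
import Mathlib

section
/- Fix γ,δ ∈ ℂ and let n ≥ 1. For every s ∈ ℂ with (2s+γ+δ)·(2s+γ+δ+1)·(2s+γ+δ+2) ≠ 0, χ_1(s)·(𝔻(𝔻χ_n))(s) = n·(n−1)·χ_{n−1}(s), where χ_1(s) = −λ(s) = −s(s+γ+δ+1). -/
open Complex Finset

/-- Divided-difference operator on the quadratic lattice λ(s) = s(s+γ+δ+1):
(𝔻f)(s) = (f(s+1/2) − f(s−1/2))/(2s+γ+δ+1). -/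
noncomputable def Dq (γ δ : ℂ) (f : ℂ → ℂ) (s : ℂ) : ℂ :=
  (f (s + 1/2) - f (s - 1/2)) / (2*s + γ + δ + 1)

/-- χ_n(s) = ∏_{k=0}^{n−1}(k − s)(s + γ + δ + 1 + k). -/
noncomputable def chi (γ δ : ℂ) (n : ℕ) (s : ℂ) : ℂ :=
  ∏ k ∈ Finset.range n, (((k : ℂ) - s) * (s + γ + δ + 1 + k))

noncomputable def ff (a : ℂ) (n : ℕ) : ℂ := ∏ k ∈ Finset.range n, (a + k)

lemma ff_front (a : ℂ) (n : ℕ) : ff a (n+1) = a * ff (a+1) n := by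
  rw [ff, Finset.prod_range_succ', ff]
  rw [mul_comm]
  congr 1
  · norm_num
  · exact Finset.prod_congr rfl (fun k _ => by push_cast; ring)

lemma ff_back (a : ℂ) (n : ℕ) : ff a (n+1) = ff a n * (a+n) := by
  rw [ff, Finset.prod_range_succ, ff]

lemma glem (a b : ℂ) (n : ℕ) :
    ff a (n+1) * ff b (n+1) - ff (a+1) (n+1) * ff (b-1) (n+1)
      = ((n:ℂ)+1)*(a-b+1) * ff (a+1) n * ff b n := by
  cases n with
  | zero => simp [ff]; ring
  | succ m =>
    rw [ff_front a (m+1), ff_front (a+1) m, ff_front b (m+1), ff_back (b+1) m,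
        ff_front (a+1) (m+1), ff_back (a+1+1) m, ff_front (b-1) (m+1),
        show b - 1 + 1 = b by ring, ff_front b m]
    push_cast
    ring

lemma chi_eq (γ δ : ℂ) (n : ℕ) (s : ℂ) :
    chi γ δ n s = ff (-s) n * ff (s+γ+δ+1) n := by
  rw [chi, ff, ff, ← Finset.prod_mul_distrib]
  exact Finset.prod_congr rfl (fun k _ => by ring)

lemma Dchi (γ δ : ℂ) (m : ℕ) (s : ℂ) (hs : 2*s+γ+δ+1 ≠ 0) :
    Dq γ δ (fun t => chi γ δ (m+1) t) s
      = -((m:ℂ)+1) * (ff (-(s+1/2)+1) m * ff (s+1/2+γ+δ+1) m) := by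
  rw [Dq]
  simp only [chi_eq]
  rw [div_eq_iff hs,
      show (-(s - 1/2) : ℂ) = -(s+1/2)+1 by ring,
      show (s - 1/2 + γ + δ + 1 : ℂ) = s+1/2+γ+δ+1-1 by ring]
  have G := glem (-(s+1/2)) (s+1/2+γ+δ+1) m
  linear_combination G

theorem stmt_11 (γ δ : ℂ) (n : ℕ) (hn : 1 ≤ n) :
    ∀ s : ℂ, (2*s+γ+δ) * (2*s+γ+δ+1) * (2*s+γ+δ+2) ≠ 0 →
      (-(s * (s + γ + δ + 1))) * Dq γ δ (Dq γ δ (fun t => chi γ δ n t)) s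
        = (n : ℂ) * ((n : ℂ) - 1) * chi γ δ (n-1) s := by
  intro s hs
  have h1 : 2*s+γ+δ ≠ 0 := fun h => hs (by rw [h]; ring)
  have h2 : 2*s+γ+δ+1 ≠ 0 := fun h => hs (by rw [h]; ring)
  have h3 : 2*s+γ+δ+2 ≠ 0 := fun h => hs (by rw [h]; ring)
  have h3' : 2*(s+1/2)+γ+δ+1 ≠ 0 := fun h => h3 (by linear_combination h)
  have h1' : 2*(s-1/2)+γ+δ+1 ≠ 0 := fun h => h1 (by linear_combination h)
  obtain ⟨m, rfl⟩ : ∃ m, n = m + 1 := ⟨n-1, (Nat.succ_pred_eq_of_pos hn).symm⟩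
  have D1 := Dchi γ δ m (s+1/2) h3'
  have D2 := Dchi γ δ m (s-1/2) h1'
  rw [Dq, D1, D2]
  cases m with
  | zero =>
    simp only [ff, Finset.range_zero, Finset.prod_empty, Nat.add_sub_cancel]
    push_cast
    field_simp
    simp
  | succ m =>
    rw [show (-(s+1/2+1/2)+1 : ℂ) = -s by ring,
        show (s+1/2+1/2+γ+δ+1 : ℂ) = s+γ+δ+1+1 by ring,
        show (-(s-1/2+1/2)+1 : ℂ) = -s+1 by ring,
        show (s-1/2+1/2+γ+δ+1 : ℂ) = s+γ+δ+1 by ring,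
        Nat.add_sub_cancel, chi_eq, ff_front (-s) m, ff_front (s+γ+δ+1) m,
        ff_back (-s+1) m, ff_back (s+γ+δ+1+1) m]
    rw [← mul_div_assoc, div_eq_iff h2]
    push_cast
    ring
end

section
/- Fix γ,δ ∈ ℂ and let n ≥ 1. For every s ∈ ℂ with (2s+γ+δ)·(2s+γ+δ+2) ≠ 0, χ_1(s)·(𝕊(𝔻χ_n))(s) = (n(n−1)(2n + γ + δ − 1)/2)·χ_{n−1}(s) − n·χ_n(s), where χ_1(s) = −λ(s) = −s(s+γ+δ+1). -/
open Complex Finset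

/-- Averaging operator on the quadratic lattice. -/
noncomputable def Sq (f : ℂ → ℂ) (s : ℂ) : ℂ :=
  (f (s + 1/2) + f (s - 1/2)) / 2

noncomputable def cprod (c : ℂ) (n : ℕ) (s : ℂ) : ℂ :=
  ∏ k ∈ Finset.range n, (((k : ℂ) - s) * (s + c + k))

lemma cprod_succ (c : ℂ) (m : ℕ) (s : ℂ) :
    cprod c (m+1) s = cprod c m s * (((m:ℂ) - s) * (s + c + m)) := by
  simp [cprod, Finset.prod_range_succ]

lemma cprod_shift_up (c : ℂ) (m : ℕ) (s : ℂ) :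
    cprod c (m+1) (s+1) = (-1-s) * (s+c+(m:ℂ)+1) * cprod (c+1) m s := by
  induction m with
  | zero =>
      rw [cprod_succ]
      simp only [cprod, Finset.prod_range_zero, Nat.cast_zero]
      ring
  | succ m ih =>
      rw [cprod_succ, ih, cprod_succ]
      push_cast
      ring

lemma cprod_shift_down (c : ℂ) (m : ℕ) (s : ℂ) :
    cprod c (m+1) (s-1) = ((m:ℂ)+1-s) * (s+c-1) * cprod (c+1) m (s-1) := by
  induction m with
  | zero =>
      rw [cprod_succ]
      simp only [cprod, Finset.prod_range_zero, Nat.cast_zero]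
      ring
  | succ m ih =>
      rw [cprod_succ, ih, cprod_succ]
      push_cast
      ring

lemma cprod_rel_up (c : ℂ) (m : ℕ) (s : ℂ) :
    (s+c) * cprod (c+1) m s = (s+c+(m:ℂ)) * cprod c m s := by
  induction m with
  | zero =>
      simp only [cprod, Finset.prod_range_zero, Nat.cast_zero]
      ring
  | succ m ih =>
      rw [cprod_succ, cprod_succ]
      push_cast
      linear_combination ((m:ℂ) - s) * (s + c + 1 + m) * ih

lemma cprod_rel_down (c : ℂ) (m : ℕ) (s : ℂ) :
    s * cprod (c+1) m (s-1) = -(((m:ℂ)-s) * cprod c m s) := by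
  induction m with
  | zero =>
      simp only [cprod, Finset.prod_range_zero, Nat.cast_zero]
      ring
  | succ m ih =>
      rw [cprod_succ, cprod_succ]
      push_cast
      linear_combination ((m:ℂ)+1-s) * (s + c + m) * ih

lemma cleared_pt (c : ℂ) (m : ℕ) (s : ℂ) (h0 : s ≠ 0) (hc : s + c ≠ 0) :
    -(s*(s+c)) * ((2*s+c-1)*(cprod c (m+1) (s+1) - cprod c (m+1) s)
       + (2*s+c+1)*(cprod c (m+1) s - cprod c (m+1) (s-1)))
    = (2*s+c-1)*(2*s+c+1) *
        (((m:ℂ)+1)*(m:ℂ)*(2*(m:ℂ)+c)*cprod c m s - 2*((m:ℂ)+1)*cprod c (m+1) s) := by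
  have hB : cprod (c+1) m s = (s+c+(m:ℂ)) * cprod c m s / (s+c) := by
    rw [eq_div_iff hc]; linear_combination cprod_rel_up c m s
  have hB' : cprod (c+1) m (s-1) = -(((m:ℂ)-s) * cprod c m s) / s := by
    rw [eq_div_iff h0]; linear_combination cprod_rel_down c m s
  rw [cprod_shift_up, cprod_shift_down, hB, hB', cprod_succ]
  field_simp
  ring

noncomputable def chiP (c : ℂ) (n : ℕ) : Polynomial ℂ :=
  ∏ k ∈ Finset.range n,
    ((Polynomial.C (k:ℂ) - Polynomial.X) * (Polynomial.X + Polynomial.C c + Polynomial.C (k:ℂ)))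

lemma eval_chiP (c : ℂ) (n : ℕ) (s : ℂ) : (chiP c n).eval s = cprod c n s := by
  simp [chiP, cprod, Polynomial.eval_prod]

open Polynomial in
lemma cleared (c : ℂ) (m : ℕ) (s : ℂ) :
    -(s*(s+c)) * ((2*s+c-1)*(cprod c (m+1) (s+1) - cprod c (m+1) s)
       + (2*s+c+1)*(cprod c (m+1) s - cprod c (m+1) (s-1)))
    = (2*s+c-1)*(2*s+c+1) *
        (((m:ℂ)+1)*(m:ℂ)*(2*(m:ℂ)+c)*cprod c m s - 2*((m:ℂ)+1)*cprod c (m+1) s) := by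
  set P : Polynomial ℂ :=
    -(X*(X+C c)) * ((2*X+C c-1)*((chiP c (m+1)).comp (X+1) - chiP c (m+1))
       + (2*X+C c+1)*(chiP c (m+1) - (chiP c (m+1)).comp (X-1)))
    - (2*X+C c-1)*(2*X+C c+1) *
        (C (((m:ℂ)+1)*(m:ℂ)*(2*(m:ℂ)+c)) * chiP c m - C (2*((m:ℂ)+1)) * chiP c (m+1))
    with hP
  have hroots : ∀ t : ℂ, t ≠ 0 → t + c ≠ 0 → P.IsRoot t := by
    intro t h0 hc
    have h := cleared_pt c m t h0 hc
    simp only [Polynomial.IsRoot, hP, Polynomial.eval_sub, Polynomial.eval_mul,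
      Polynomial.eval_add, Polynomial.eval_neg, Polynomial.eval_comp, Polynomial.eval_C,
      Polynomial.eval_X, Polynomial.eval_one, Polynomial.eval_ofNat, eval_chiP]
    linear_combination h
  have hinf : {t : ℂ | P.IsRoot t}.Infinite := by
    have hfin : ({0, -c} : Set ℂ).Finite := (Set.finite_singleton (-c)).insert 0
    refine hfin.infinite_compl.mono ?_
    intro t ht
    simp only [Set.mem_compl_iff, Set.mem_insert_iff, Set.mem_singleton_iff, not_or] at ht
    refine hroots t ht.1 ?_
    intro h
    exact ht.2 (by linear_combination h)
  have hP0 : P = 0 := Polynomial.eq_zero_of_infinite_isRoot P hinf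
  have hev := congrArg (Polynomial.eval s) hP0
  simp only [hP, Polynomial.eval_sub, Polynomial.eval_mul, Polynomial.eval_add,
    Polynomial.eval_neg, Polynomial.eval_comp, Polynomial.eval_C, Polynomial.eval_X,
    Polynomial.eval_one, Polynomial.eval_ofNat, Polynomial.eval_zero, eval_chiP] at hev
  linear_combination hev

theorem stmt_12 (γ δ : ℂ) (n : ℕ) (hn : 1 ≤ n) :
    ∀ s : ℂ, (2*s+γ+δ) * (2*s+γ+δ+2) ≠ 0 →
      (-(s * (s + γ + δ + 1))) * Sq (Dq γ δ (fun t => chi γ δ n t)) s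
        = ((n : ℂ) * ((n : ℂ) - 1) * (2*(n : ℂ) + γ + δ - 1) / 2) * chi γ δ (n-1) s
          - (n : ℂ) * chi γ δ n s := by
  intro s hs
  obtain ⟨m, rfl⟩ : ∃ m, n = m + 1 := ⟨n - 1, (Nat.succ_pred_eq_of_pos hn).symm⟩
  rw [mul_ne_zero_iff] at hs
  obtain ⟨hA, hA2⟩ := hs
  have hchi : ∀ k t, chi γ δ k t = cprod (γ+δ+1) k t := by
    intro k t; unfold chi cprod
    exact Finset.prod_congr rfl fun x _ => by ring_nf
  have e1 : s + 1/2 + 1/2 = s + 1 := by ring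
  have e2 : s + 1/2 - 1/2 = s := by ring
  have e3 : s - 1/2 + 1/2 = s := by ring
  have e4 : s - 1/2 - 1/2 = s - 1 := by ring
  have key := cleared (γ+δ+1) m s
  have hd1 : 2*(s+1/2) + γ + δ + 1 ≠ 0 := by
    intro h; exact hA2 (by linear_combination h)
  have hd2 : 2*(s-1/2) + γ + δ + 1 ≠ 0 := by
    intro h; exact hA (by linear_combination h)
  have d1 : 2*(s+1/2) + γ + δ + 1 = 2*s+γ+δ+2 := by ring
  have d2 : 2*(s-1/2) + γ + δ + 1 = 2*s+γ+δ := by ring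
  simp only [Sq, Dq, e1, e2, e3, e4, hchi, Nat.add_sub_cancel, d1, d2]
  have hcast : ((m+1 : ℕ) : ℂ) = (m : ℂ) + 1 := by push_cast; ring
  rw [hcast]
  rw [div_add_div _ _ hA2 hA, div_div, mul_div_assoc', div_eq_iff (mul_ne_zero (mul_ne_zero hA2 hA) two_ne_zero)]
  linear_combination key
end
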